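/- If Γ is a Schur ring over a finite group G (with principal sets Γ_1,...,Γ_m partitioning G), C ⊆ G satisfies that the sum of elements of C lies in the span of the Γ̄_i, and x = Σ_{g∈G} λ_g g lies in the Schur ring, then for every scalar λ, the element Σ_{g ∈ C, λ_g = λ} g also lies in the Schur ring (Schur–Wielandt principle). -/

import Mathlib

open scoped Classical

noncomputable section

/-- The "simple quantity" `P̄ = Σ_{g ∈ P} g` in the group algebra `ℂ[G]`. -/
def simpleQuantity (G : Type*) [Group G] (P : Finset G) : MonoidAlgebra ℂ G :=
  ∑ g ∈ P, MonoidAlgebra.of ℂ G g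

/-- A Schur ring over a finite group `G`: a partition of `G` into principal sets
`Γ₁, …, Γₘ` with `Γ₁ = {1}`, closed under inversion, whose simple quantities
multiply with nonnegative integer structure constants. -/
structure SchurRing (G : Type*) [Group G] [Fintype G] [DecidableEq G] where
  parts : Finset (Finset G)
  partition : ∀ g : G, ∃! P, P ∈ parts ∧ g ∈ P
  one_mem : ({1} : Finset G) ∈ parts
  inv_mem : ∀ P ∈ parts, P.image (·⁻¹) ∈ parts
  structure_consts : ∀ P ∈ parts, ∀ Q ∈ parts, ∃ lam : Finset G → ℕ,
    simpleQuantity G P * simpleQuantity G Q =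
      ∑ R ∈ parts, (lam R : ℂ) • simpleQuantity G R

/-- The span of the simple quantities of a Schur ring, as a subspace of `ℂ[G]`. -/
def SchurRing.carrier {G : Type*} [Group G] [Fintype G] [DecidableEq G]
    (S : SchurRing G) : Submodule ℂ (MonoidAlgebra ℂ G) :=
  Submodule.span ℂ ((fun P => simpleQuantity G P) '' S.parts)

lemma simpleQuantity_apply {G : Type*} [Group G] [DecidableEq G] (P : Finset G) (g : G) :
    (simpleQuantity G P).coeff g = if g ∈ P then 1 else 0 := by
  classical
  rw [simpleQuantity, MonoidAlgebra.coeff_sum, Finset.sum_apply']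
  simp [MonoidAlgebra.of_apply, MonoidAlgebra.coeff_single, Finsupp.single_apply]

lemma carrier_const {G : Type*} [Group G] [Fintype G] [DecidableEq G]
    (S : SchurRing G) {y : MonoidAlgebra ℂ G} (hy : y ∈ S.carrier)
    {P : Finset G} (hP : P ∈ S.parts) {g h : G} (hg : g ∈ P) (hh : h ∈ P) :
    y.coeff g = y.coeff h := by
  induction hy using Submodule.span_induction with
  | mem z hz =>
    obtain ⟨Q, hQ, rfl⟩ := hz
    rw [simpleQuantity_apply, simpleQuantity_apply]
    obtain ⟨R, -, hR⟩ := S.partition g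
    by_cases hgQ : g ∈ Q
    · have hQP : Q = P := (hR Q ⟨hQ, hgQ⟩).trans (hR P ⟨hP, hg⟩).symm
      have hhQ : h ∈ Q := hQP ▸ hh
      rw [if_pos hgQ, if_pos hhQ]
    · have hhQ : h ∉ Q := fun hhQ => by
        obtain ⟨R', -, hR'⟩ := S.partition h
        have : Q = P := (hR' Q ⟨hQ, hhQ⟩).trans (hR' P ⟨hP, hh⟩).symm
        exact hgQ (this ▸ hg)
      rw [if_neg hgQ, if_neg hhQ]
  | zero => simp
  | add a b _ _ ha hb => rw [MonoidAlgebra.coeff_add, Finsupp.add_apply, Finsupp.add_apply, ha, hb]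
  | smul c a _ ha => rw [MonoidAlgebra.coeff_smul, Finsupp.smul_apply, Finsupp.smul_apply, ha]

lemma union_of_parts_mem {G : Type*} [Group G] [Fintype G] [DecidableEq G]
    (S : SchurRing G) (D : Finset G)
    (hD : ∀ P ∈ S.parts, ∀ g ∈ P, g ∈ D → P ⊆ D) :
    simpleQuantity G D ∈ S.carrier := by
  classical
  have key : simpleQuantity G D =
      ∑ P ∈ S.parts.filter (· ⊆ D), simpleQuantity G P := by
    ext g
    rw [simpleQuantity_apply, MonoidAlgebra.coeff_sum, Finset.sum_apply']
    simp only [simpleQuantity_apply]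
    obtain ⟨P₀, ⟨hP₀, hgP₀⟩, hu⟩ := S.partition g
    by_cases hgD : g ∈ D
    · rw [if_pos hgD, Finset.sum_eq_single_of_mem P₀]
      · exact (if_pos hgP₀).symm
      · exact Finset.mem_filter.2 ⟨hP₀, hD P₀ hP₀ g hgP₀ hgD⟩
      · intro Q hQ hne
        have : g ∉ Q := fun hgQ => hne (hu Q ⟨(Finset.mem_filter.1 hQ).1, hgQ⟩)
        exact if_neg this
    · rw [if_neg hgD, Finset.sum_eq_zero]
      intro Q hQ
      have : g ∉ Q := fun hgQ => hgD ((Finset.mem_filter.1 hQ).2 hgQ)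
      exact if_neg this
  rw [key]
  exact Submodule.sum_mem _ fun P hP =>
    Submodule.subset_span ⟨P, (Finset.mem_filter.1 hP).1, rfl⟩

/-- Schur–Wielandt principle: if `S` is a Schur ring over a finite
group `G`, `C ⊆ G` has its simple quantity `C̄` in `S`, and
`x = Σ_{g ∈ G} λ_g g` lies in `S`, then for every scalar `λ` the element
`Σ_{g ∈ C, λ_g = λ} g` also lies in `S`. -/
theorem schur_wielandt {G : Type*} [Group G] [Fintype G] [DecidableEq G]
    (S : SchurRing G) (C : Finset G)
    (hC : simpleQuantity G C ∈ S.carrier)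
    (x : MonoidAlgebra ℂ G) (hx : x ∈ S.carrier) (lam : ℂ) :
    simpleQuantity G (C.filter (fun g => x.coeff g = lam)) ∈ S.carrier := by
  apply union_of_parts_mem
  intro P hP g hgP hgD h hhP
  obtain ⟨hgC, hglam⟩ := Finset.mem_filter.1 hgD
  refine Finset.mem_filter.2 ⟨?_, ?_⟩
  · have := carrier_const S hC hP hhP hgP
    rw [simpleQuantity_apply, simpleQuantity_apply, if_pos hgC] at this
    by_contra hh
    rw [if_neg hh] at this
    exact one_ne_zero this.symm
  · exact (carrier_const S hx hP hhP hgP).trans hglam
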